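/- In the setting of the Radau quadrature f_0 = ρ_{k+1} f(1) + Σ_{i=0}^k ρ_i f(α_i) exact for degree ≤ 2k with ρ_i > 0 and nodes in [ℓ, 1), set M = 1/ρ_{k+1} and define R_j = 1/M + Σ_{i=0}^k ρ_i Q_j(α_i). If R_j ≥ 0 for every j ≥ 2k+1, then for every polynomial g of any degree with Krawtchouk expansion g = Σ_j g_j Q_j satisfying g_j ≥ 0 for j ≥ 1 and g(α_i) ≤ h(α_i) for i = 0,...,k, one has M g_0 - g(1) ≤ M Σ_{i=0}^k ρ_i h(α_i). That is, no feasible LP polynomial beats the universal lower bound M² Σ ρ_i h(α_i). -/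

import Mathlib

open MeasureTheory

/-- In the setting of the Radau quadrature `f_0 = ρ_{k+1} f(1) + Σ_{i=0}^k ρ_i f(α_i)`
exact for degree `≤ 2k` with `ρ_i > 0` and nodes in `[ℓ, 1)`, set `M = 1/ρ_{k+1}` and
`R_j = 1/M + Σ_{i=0}^k ρ_i Q_j(α_i)`. If `R_j ≥ 0` for every `j ≥ 2k+1`, then every
polynomial `g = Σ_j g_j Q_j` with `g_j ≥ 0` for `j ≥ 1` and `g(α_i) ≤ h(α_i)` for
`i = 0,...,k` satisfies `M g_0 - g(1) ≤ M Σ_{i=0}^k ρ_i h(α_i)`: no feasible LP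
polynomial beats the universal lower bound `M² Σ ρ_i h(α_i)`. -/
theorem energy_lp_first_level_optimality (k : ℕ) (hk : 1 ≤ k)
    (μ : Measure ℝ) [IsProbabilityMeasure μ]
    (hint : ∀ p : Polynomial ℝ, Integrable (fun t => p.eval t) μ)
    (ℓ : ℝ) (α ρ : ℕ → ℝ)
    (hnodes : ∀ i, i ≤ k → α i ∈ Set.Ico ℓ 1)
    (hρ : ∀ i, i ≤ k + 1 → 0 < ρ i)
    (hquad : ∀ p : Polynomial ℝ, p.natDegree ≤ 2 * k →
      (∫ t, p.eval t ∂μ) = ρ (k + 1) * p.eval 1 + ∑ i ∈ Finset.range (k + 1), ρ i * p.eval (α i))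
    (M : ℝ) (hM : M = 1 / ρ (k + 1))
    (Q : ℕ → Polynomial ℝ)
    (hQdeg : ∀ i, (Q i).natDegree = i) (hQ1 : ∀ i, (Q i).eval 1 = 1)
    (hQ0 : Q 0 = 1)
    (hQint : ∀ j, 1 ≤ j → (∫ t, (Q j).eval t ∂μ) = 0)
    (hR : ∀ j, 2 * k + 1 ≤ j →
      0 ≤ 1 / M + ∑ i ∈ Finset.range (k + 1), ρ i * (Q j).eval (α i))
    (h : ℝ → ℝ) (N : ℕ) (gc : ℕ → ℝ) (hgci : ∀ j, 1 ≤ j → 0 ≤ gc j)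
    (g : Polynomial ℝ)
    (hg : g = ∑ j ∈ Finset.range (N + 1), Polynomial.C (gc j) * Q j)
    (hgh : ∀ i, i ≤ k → g.eval (α i) ≤ h (α i)) :
    M * gc 0 - g.eval 1 ≤ M * ∑ i ∈ Finset.range (k + 1), ρ i * h (α i) := by
  have hρk1 : 0 < ρ (k + 1) := hρ (k + 1) le_rfl
  have hMpos : 0 < M := by rw [hM]; positivity
  have hMinv : 1 / M = ρ (k + 1) := by rw [hM]; field_simp
  set s : ℕ → ℝ := fun j => ∑ i ∈ Finset.range (k + 1), ρ i * (Q j).eval (α i) with hsdef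
  have hgeval : ∀ x : ℝ, g.eval x = ∑ j ∈ Finset.range (N + 1), gc j * (Q j).eval x := by
    intro x
    rw [hg, Polynomial.eval_finset_sum]
    simp
  have hg1 : g.eval 1 = ∑ j ∈ Finset.range (N + 1), gc j := by
    simp [hgeval, hQ1]
  have hs0 : s 0 = 1 - ρ (k + 1) := by
    have h0 := hquad (Q 0) (by rw [hQdeg]; omega)
    rw [hQ0] at h0
    simp only [Polynomial.eval_one, integral_const, measure_univ, probReal_univ, ENNReal.toReal_one,
      smul_eq_mul, mul_one, one_mul] at h0
    have : (1 : ℝ) = ρ (k + 1) + s 0 := by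
      rw [h0, hsdef]; simp [hQ0]
    linarith
  have hsge : ∀ j, 1 ≤ j → -ρ (k + 1) ≤ s j := by
    intro j hj
    by_cases hjle : j ≤ 2 * k
    · have hq := hquad (Q j) (by rw [hQdeg]; exact hjle)
      rw [hQint j hj, hQ1 j] at hq
      have : s j = -ρ (k + 1) := by rw [hsdef]; linarith [hq]
      linarith
    · have := hR j (by omega)
      rw [hMinv] at this
      rw [hsdef]
      linarith
  have swap : ∑ i ∈ Finset.range (k + 1), ρ i * g.eval (α i)
      = ∑ j ∈ Finset.range (N + 1), gc j * s j := by
    simp only [hgeval, Finset.mul_sum, hsdef]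
    rw [Finset.sum_comm]
    apply Finset.sum_congr rfl
    intro j _
    apply Finset.sum_congr rfl
    intro i _
    ring
  have hterm : ∀ j ∈ Finset.range (N + 1),
      (if j = 0 then gc 0 else 0) - gc j * ρ (k + 1) ≤ gc j * s j := by
    intro j _
    rcases Nat.eq_zero_or_pos j with rfl | hj
    · simp [hs0]; ring_nf; simp
    · have h1 : gc j * (-ρ (k + 1)) ≤ gc j * s j :=
        mul_le_mul_of_nonneg_left (hsge j hj) (hgci j hj)
      have : j ≠ 0 := by omega
      simp [this]
      linarith
  have hsum := Finset.sum_le_sum hterm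
  have hlhs : ∑ j ∈ Finset.range (N + 1),
      ((if j = 0 then gc 0 else 0) - gc j * ρ (k + 1))
      = gc 0 - ρ (k + 1) * g.eval 1 := by
    rw [Finset.sum_sub_distrib, hg1, Finset.mul_sum]
    congr 1
    · simp
    · apply Finset.sum_congr rfl; intros; ring
  rw [hlhs, ← swap] at hsum
  have hgh' : ∑ i ∈ Finset.range (k + 1), ρ i * g.eval (α i)
      ≤ ∑ i ∈ Finset.range (k + 1), ρ i * h (α i) := by
    apply Finset.sum_le_sum
    intro i hi
    have hi' : i ≤ k := by simpa using Nat.lt_succ_iff.mp (Finset.mem_range.mp hi)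
    exact mul_le_mul_of_nonneg_left (hgh i hi') (le_of_lt (hρ i (by omega)))
  have key : gc 0 - ρ (k + 1) * g.eval 1 ≤ ∑ i ∈ Finset.range (k + 1), ρ i * h (α i) :=
    le_trans hsum hgh'
  have hMρ : M * ρ (k + 1) = 1 := by rw [hM]; field_simp
  have := mul_le_mul_of_nonneg_left key (le_of_lt hMpos)
  calc M * gc 0 - g.eval 1 = M * (gc 0 - ρ (k + 1) * g.eval 1) := by
        rw [mul_sub, ← mul_assoc, hMρ, one_mul]
    _ ≤ M * ∑ i ∈ Finset.range (k + 1), ρ i * h (α i) := this
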